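/- arXiv:0807.3675 — 3 statements merged into one kernel-verified Lean document; each statement's English description precedes it below -/
import Mathlib

section
/- For every $0 \le p \le 1/2$ and every real $t$, the moment generating function of $X_p$ satisfies $\mathbb{E}[e^{t X_p}] \le e^{(1-p)^2 t^2/2}$. -/
open Real

/-- For `0 ≤ p ≤ 1/2` and every real `t`, the moment generating function of `X_p`,
namely `E[e^{tX_p}] = p e^{-t(1-p)} + (1-p) e^{tp}`, is at most `e^{(1-p)^2 t^2/2}`. -/
theorem stmt_1 (p t : ℝ) (hp0 : 0 ≤ p) (hp : p ≤ 1 / 2) :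
    p * Real.exp (-t * (1 - p)) + (1 - p) * Real.exp (t * p) ≤
      Real.exp ((1 - p) ^ 2 * t ^ 2 / 2) := by
  set q : ℝ := 1 - p with hq
  have hq2 : (1:ℝ)/2 ≤ q := by simp [hq]; linarith
  have hq0 : 0 < q := by linarith
  -- auxiliary functions
  set u : ℝ → ℝ := fun s => p * Real.exp (-s) with hu
  set d : ℝ → ℝ := fun s => q + u s with hd
  have hdpos : ∀ s, 0 < d s := fun s => by
    have := Real.exp_pos (-s)
    have : 0 ≤ u s := by positivity
    simp only [hd]; linarith
  set F : ℝ → ℝ := fun s => q^2 * s^2 / 2 - s * p - Real.log (d s) with hF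
  set G : ℝ → ℝ := fun s => q^2 * s - p + u s / d s with hG
  have hud : ∀ s, HasDerivAt u (-(u s)) s := by
    intro s
    have h1 : HasDerivAt (fun s : ℝ => Real.exp (-s)) (-Real.exp (-s)) s := by
      simpa [Function.comp_def] using (Real.hasDerivAt_exp (-s)).comp s ((hasDerivAt_id s).neg)
    simpa [hu, mul_comm, mul_assoc] using h1.const_mul p
  have hdd : ∀ s, HasDerivAt d (-(u s)) s := fun s => by
    simpa [hd] using (hud s).const_add q
  have hFd : ∀ s, HasDerivAt F (G s) s := by
    intro s
    have h1 : HasDerivAt (fun s : ℝ => Real.log (d s)) (-(u s) / d s) s :=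
      (hdd s).log (hdpos s).ne'
    have h2 : HasDerivAt (fun s : ℝ => q^2 * s^2 / 2 - s * p) (q^2 * s - p) s := by
      have := ((hasDerivAt_pow 2 s).const_mul (q^2)).div_const 2
      have h3 := ((hasDerivAt_id s).mul_const p)
      exact (this.sub h3).congr_deriv (by simp; ring)
    have := h2.sub h1
    refine this.congr_deriv ?_
    simp only [hG]; ring
  have hGd : ∀ s, HasDerivAt G (q^2 - q * u s / (d s)^2) s := by
    intro s
    have h1 : HasDerivAt (fun s => u s / d s)
        ((-(u s) * d s - u s * (-(u s))) / (d s)^2) s :=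
      (hud s).div (hdd s) (hdpos s).ne'
    have h2 : HasDerivAt (fun s : ℝ => q^2 * s - p) (q^2) s := by
      simpa using ((hasDerivAt_id s).const_mul (q^2)).sub_const p
    have := h2.add h1
    refine this.congr_deriv ?_
    have hds : d s = q + u s := rfl
    field_simp [(hdpos s).ne']
    ring
  have hG'nonneg : ∀ s, 0 ≤ q^2 - q * u s / (d s)^2 := by
    intro s
    have hus : 0 ≤ u s := by have := (Real.exp_pos (-s)).le; positivity
    have hds : d s = q + u s := rfl
    have hsq : 4 * (q * u s) ≤ (d s)^2 := by
      have : 0 ≤ (q - u s)^2 := sq_nonneg _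
      rw [hds]; nlinarith
    have h4q : 1 ≤ 4 * q^2 := by nlinarith
    rw [sub_nonneg, div_le_iff₀ (by positivity)]
    nlinarith [sq_nonneg (d s), mul_nonneg hq0.le hus]
  have hGmono : Monotone G := by
    have : ∀ s, 0 ≤ deriv G s := fun s => by rw [(hGd s).deriv]; exact hG'nonneg s
    exact monotone_of_deriv_nonneg (fun s => (hGd s).differentiableAt) this
  have hG0 : G 0 = 0 := by
    have : d 0 = 1 := by simp [hd, hu, hq]
    simp [hG, hu, this]
  have hF0 : F 0 = 0 := by
    have : d 0 = 1 := by simp [hd, hu, hq]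
    simp [hF, this]
  have hFnonneg : 0 ≤ F t := by
    have hFdiff : ∀ s, DifferentiableAt ℝ F s := fun s => (hFd s).differentiableAt
    rcases le_total 0 t with h | h
    · have hmono : MonotoneOn F (Set.Ici 0) := by
        apply monotoneOn_of_deriv_nonneg (convex_Ici 0)
          (Differentiable.continuous (fun s => hFdiff s)).continuousOn
          (fun s _ => (hFdiff s).differentiableWithinAt)
        intro s hs
        rw [(hFd s).deriv, ← hG0]
        exact hGmono (le_of_lt (by simpa using hs))
      have := hmono (Set.self_mem_Ici) h h
      rwa [hF0] at this
    · have hanti : AntitoneOn F (Set.Iic 0) := by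
        apply antitoneOn_of_deriv_nonpos (convex_Iic 0)
          (Differentiable.continuous (fun s => hFdiff s)).continuousOn
          (fun s _ => (hFdiff s).differentiableWithinAt)
        intro s hs
        rw [(hFd s).deriv, ← hG0]
        exact hGmono (le_of_lt (by simpa using hs))
      have := hanti h (Set.self_mem_Iic) h
      rwa [hF0] at this
  -- now conclude
  have key : t * p + Real.log (d t) ≤ q^2 * t^2 / 2 := by
    have := hFnonneg
    simp only [hF] at this
    linarith
  have hLHS : p * Real.exp (-t * (1 - p)) + (1 - p) * Real.exp (t * p)
      = Real.exp (t * p + Real.log (d t)) := by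
    rw [Real.exp_add, Real.exp_log (hdpos t)]
    simp only [hd, hu, hq]
    rw [show -t * (1 - p) = t * p + -t from by ring, Real.exp_add]
    ring
  rw [hLHS]
  exact Real.exp_le_exp.mpr key
end

section
/- For every $1/2 < p \le 1$ and every real $t$, $\mathbb{E}[e^{t X_p}] \le e^{p^2 t^2/2}$. -/
/-- For `1/2 < p ≤ 1` and every real `t`, the moment generating function of `X_p`,
namely `E[e^{tX_p}] = p e^{-t(1-p)} + (1-p) e^{tp}`, is at most `e^{p^2 t^2 / 2}`. -/
theorem stmt_2 (p t : ℝ) (hp0 : 1 / 2 < p) (hp : p ≤ 1) :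
    p * Real.exp (-t * (1 - p)) + (1 - p) * Real.exp (t * p) ≤
      Real.exp (p ^ 2 * t ^ 2 / 2) := by
  have hppos : 0 < p := by linarith
  have ha : (0:ℝ) ≤ 1 / (2 * p) := by positivity
  have hb : (0:ℝ) ≤ 1 - 1 / (2 * p) := by
    rw [sub_nonneg, div_le_one (by linarith)]; linarith
  have hab : 1 / (2 * p) + (1 - 1 / (2 * p)) = (1:ℝ) := by ring
  have hconv := convexOn_exp.2 (Set.mem_univ (-t * p)) (Set.mem_univ (t * p)) ha hb hab
  have hx : (1 / (2 * p)) • (-t * p) + (1 - 1 / (2 * p)) • (t * p) = -t * (1 - p) := by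
    simp only [smul_eq_mul]
    field_simp
    ring
  rw [hx] at hconv
  simp only [smul_eq_mul] at hconv
  have h1 : p * Real.exp (-t * (1 - p)) + (1 - p) * Real.exp (t * p) ≤
      Real.cosh (t * p) := by
    have := mul_le_mul_of_nonneg_left hconv hppos.le
    rw [Real.cosh_eq]
    have : p * (1 / (2 * p) * Real.exp (-t * p) + (1 - 1 / (2 * p)) * Real.exp (t * p))
        = (1/2) * Real.exp (-t * p) + (p - 1/2) * Real.exp (t * p) := by
      field_simp
    have heq : Real.exp (-(t * p)) = Real.exp (-t * p) := by ring_nf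
    linarith
  calc p * Real.exp (-t * (1 - p)) + (1 - p) * Real.exp (t * p)
      ≤ Real.cosh (t * p) := h1
    _ ≤ Real.exp ((t * p) ^ 2 / 2) := Real.cosh_le_exp_half_sq _
    _ = Real.exp (p ^ 2 * t ^ 2 / 2) := by ring_nf
end

section
/- For every $0 \le p \le 1$ and every real $t$, $\mathbb{E}[e^{tX_p}] \le e^{q^2 t^2/2}$, where $q = \max\{p, 1-p\}$. -/
lemma exp_le_interp (t q y : ℝ) (hq : 0 < q) (h1 : -q ≤ y) (h2 : y ≤ q) :
    Real.exp (t * y) ≤ (q - y) / (2 * q) * Real.exp (-(t * q))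
      + (q + y) / (2 * q) * Real.exp (t * q) := by
  have ha : 0 ≤ (q - y) / (2 * q) := by
    apply div_nonneg <;> linarith
  have hb : 0 ≤ (q + y) / (2 * q) := by
    apply div_nonneg <;> linarith
  have hab : (q - y) / (2 * q) + (q + y) / (2 * q) = 1 := by
    field_simp; ring
  have := convexOn_exp.2 (Set.mem_univ (-(t * q))) (Set.mem_univ (t * q)) ha hb hab
  simp only [smul_eq_mul] at this
  have harg : (q - y) / (2 * q) * (-(t * q)) + (q + y) / (2 * q) * (t * q) = t * y := by
    field_simp; ring
  rwa [harg] at this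

/-- For `0 ≤ p ≤ 1` and every real `t`, with `q = max {p, 1-p}`, the moment generating
function of `X_p`, namely `E[e^{tX_p}] = p e^{-t(1-p)} + (1-p) e^{tp}`, is at most
`e^{q^2 t^2/2}`. -/
theorem stmt_3 (p t : ℝ) (hp0 : 0 ≤ p) (hp : p ≤ 1) :
    p * Real.exp (-t * (1 - p)) + (1 - p) * Real.exp (t * p) ≤
      Real.exp ((max p (1 - p)) ^ 2 * t ^ 2 / 2) := by
  set q := max p (1 - p) with hqdef
  have hpq : p ≤ q := le_max_left _ _
  have h1pq : 1 - p ≤ q := le_max_right _ _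
  have hq : 0 < q := by linarith
  have e1 : Real.exp (-t * (1 - p)) ≤ (q - (p - 1)) / (2 * q) * Real.exp (-(t * q))
      + (q + (p - 1)) / (2 * q) * Real.exp (t * q) := by
    have := exp_le_interp t q (p - 1) hq (by linarith) (by linarith)
    have h : t * (p - 1) = -t * (1 - p) := by ring
    rwa [h] at this
  have e2 : Real.exp (t * p) ≤ (q - p) / (2 * q) * Real.exp (-(t * q))
      + (q + p) / (2 * q) * Real.exp (t * q) := exp_le_interp t q p hq (by linarith) hpq
  have hexp1 : 0 < Real.exp (-(t * q)) := Real.exp_pos _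
  have hexp2 : 0 < Real.exp (t * q) := Real.exp_pos _
  have key : p * Real.exp (-t * (1 - p)) + (1 - p) * Real.exp (t * p) ≤
      (Real.exp (-(t * q)) + Real.exp (t * q)) / 2 := by
    have b1 := mul_le_mul_of_nonneg_left e1 hp0
    have b2 := mul_le_mul_of_nonneg_left e2 (by linarith : (0:ℝ) ≤ 1 - p)
    have hsum : p * ((q - (p - 1)) / (2 * q) * Real.exp (-(t * q))
        + (q + (p - 1)) / (2 * q) * Real.exp (t * q))
        + (1 - p) * ((q - p) / (2 * q) * Real.exp (-(t * q))
        + (q + p) / (2 * q) * Real.exp (t * q))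
        = (Real.exp (-(t * q)) + Real.exp (t * q)) / 2 := by
      field_simp
      ring
    linarith
  calc p * Real.exp (-t * (1 - p)) + (1 - p) * Real.exp (t * p)
      ≤ (Real.exp (-(t * q)) + Real.exp (t * q)) / 2 := key
    _ = Real.cosh (t * q) := by rw [Real.cosh_eq]; ring_nf
    _ ≤ Real.exp ((t * q) ^ 2 / 2) := Real.cosh_le_exp_half_sq _
    _ = Real.exp (q ^ 2 * t ^ 2 / 2) := by ring_nf
end
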